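/- Let {x_k}, {τ_k}, {Δ_k}, {A_k} be generated by the TRFD algorithm. If ψ_{p,Δ_*}(x_k) > ε and Δ_k ≤ (1−α)θ η_{p,Δ_*}(x_k;A_k) / (L_{h,p} L_J c_{p,2}(m) c_{2,p}(n)²), then iteration k is successful, i.e. η_{p,Δ_*}(x_k;A_k) ≥ ε/2 and ρ_k ≥ α. -/

import Mathlib

open scoped ENNReal

noncomputable section

/-- The `p`-norm on `ℝ^n`, for `p ∈ [1,∞]`. -/
def pNorm (p : ℝ≥0∞) {n : ℕ} (x : Fin n → ℝ) : ℝ :=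
  if p = ∞ then ⨆ i, |x i| else (∑ i, |x i| ^ p.toReal) ^ (1 / p.toReal)

/-- The Euclidean norm on `ℝ^n`. -/
def eucNorm {n : ℕ} (x : Fin n → ℝ) : ℝ := Real.sqrt (∑ i, x i ^ 2)

/-- The operator norm of a matrix, induced by Euclidean norms. -/
def opNorm2 {m n : ℕ} (A : Matrix (Fin m) (Fin n) ℝ) : ℝ :=
  sSup ((fun v => eucNorm (A.mulVec v)) '' {v | eucNorm v ≤ 1})

/-- Forward finite-difference approximation of the Jacobian of `F` at `x` with stepsize `τ`:
the `j`-th column is `(F (x + τ e_j) - F x) / τ`. -/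
def fdMatrix {n m : ℕ} (F : (Fin n → ℝ) → (Fin m → ℝ)) (x : Fin n → ℝ) (τ : ℝ) :
    Matrix (Fin m) (Fin n) ℝ :=
  Matrix.of fun i j => (F (x + Pi.single j τ) i - F x i) / τ

/-- Stationarity measure `ψ_{p,r}(x)`. -/
def psi {n m : ℕ} (Ω : Set (Fin n → ℝ)) (F : (Fin n → ℝ) → (Fin m → ℝ))
    (h : (Fin m → ℝ) → ℝ) (J : (Fin n → ℝ) → Matrix (Fin m) (Fin n) ℝ)
    (p : ℝ≥0∞) (r : ℝ) (x : Fin n → ℝ) : ℝ :=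
  r⁻¹ * (h (F x) -
    sInf ((fun s => h (F x + (J x).mulVec s)) '' {s | x + s ∈ Ω ∧ pNorm p s ≤ r}))

/-- Approximate stationarity measure `η_{p,r}(x; A)`. -/
def eta {n m : ℕ} (Ω : Set (Fin n → ℝ)) (F : (Fin n → ℝ) → (Fin m → ℝ))
    (h : (Fin m → ℝ) → ℝ) (p : ℝ≥0∞) (r : ℝ) (x : Fin n → ℝ)
    (A : Matrix (Fin m) (Fin n) ℝ) : ℝ :=
  r⁻¹ * (h (F x) -
    sInf ((fun s => h (F x + A.mulVec s)) '' {s | x + s ∈ Ω ∧ pNorm p s ≤ r}))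

/-- The TRFD algorithm: `x`, `τ`, `Δ`, `A`, `d`, `ρ` are the iterates, finite-difference
stepsizes, trust-region radii, finite-difference Jacobian approximations, trial steps and
ratios generated by TRFD with parameters `ε, σ, α, θ, Δstar` from the point `x 0`. -/
def TRFDrun {n m : ℕ} (Ω : Set (Fin n → ℝ)) (F : (Fin n → ℝ) → (Fin m → ℝ))
    (h : (Fin m → ℝ) → ℝ) (p : ℝ≥0∞)
    (Lh cpm cnp ε σ α θ Δstar : ℝ)
    (x : ℕ → Fin n → ℝ) (τ Δ : ℕ → ℝ) (A : ℕ → Matrix (Fin m) (Fin n) ℝ)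
    (d : ℕ → Fin n → ℝ) (ρ : ℕ → ℝ) : Prop :=
  x 0 ∈ Ω ∧
  τ 0 = ε / (Lh * σ * cpm * cnp * Real.sqrt n) ∧
  τ 0 * Real.sqrt n ≤ Δ 0 ∧ Δ 0 ≤ Δstar ∧
  (∀ k, A k = fdMatrix F (x k) (τ k)) ∧
  (∀ k,
    -- unsuccessful iteration of type I
    (eta Ω F h p Δstar (x k) (A k) < ε / 2 ∧
      x (k + 1) = x k ∧ Δ (k + 1) = Δ k ∧ τ (k + 1) = τ k / 2) ∨
    (ε / 2 ≤ eta Ω F h p Δstar (x k) (A k) ∧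
      -- the trial step is feasible and achieves a `θ`-fraction of the optimal model decrease
      pNorm p (d k) ≤ Δ k ∧ x k + d k ∈ Ω ∧
      θ * (h (F (x k)) -
          sInf ((fun s => h (F (x k) + (A k).mulVec s)) ''
            {s | x k + s ∈ Ω ∧ pNorm p s ≤ Δ k})) ≤
        h (F (x k)) - h (F (x k) + (A k).mulVec (d k)) ∧
      ρ k = (h (F (x k)) - h (F (x k + d k))) /
            (h (F (x k)) - h (F (x k) + (A k).mulVec (d k))) ∧
      -- successful iteration
      ((α ≤ ρ k ∧ x (k + 1) = x k + d k ∧ Δ (k + 1) = min (2 * Δ k) Δstar ∧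
          τ (k + 1) = τ k) ∨
      -- unsuccessful iteration of type II
       (ρ k < α ∧ τ k * Real.sqrt n ≤ Δ k / 2 ∧
          x (k + 1) = x k ∧ Δ (k + 1) = Δ k / 2 ∧ τ (k + 1) = τ k) ∨
      -- unsuccessful iteration of type III
       (ρ k < α ∧ Δ k / 2 < τ k * Real.sqrt n ∧
          x (k + 1) = x k ∧ Δ (k + 1) = Δ k / 2 ∧ τ (k + 1) = τ k / 2))))


namespace TRFDaux

variable {k : ℕ}

/-- view a vector as an element of Euclidean space -/
def toEuc {k : ℕ} (v : Fin k → ℝ) : EuclideanSpace ℝ (Fin k) :=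
  (WithLp.equiv 2 _).symm v

lemma eucNorm_eq (v : Fin k → ℝ) : eucNorm v = ‖toEuc v‖ := by
  rw [EuclideanSpace.norm_eq, eucNorm]
  congr 1
  refine Finset.sum_congr rfl fun i _ => ?_
  rw [Real.norm_eq_abs, sq_abs]
  rfl

lemma toEuc_add (v w : Fin k → ℝ) : toEuc (v + w) = toEuc v + toEuc w := rfl
lemma toEuc_smul (t : ℝ) (v : Fin k → ℝ) : toEuc (t • v) = t • toEuc v := rfl

lemma eucNorm_nonneg (v : Fin k → ℝ) : 0 ≤ eucNorm v := Real.sqrt_nonneg _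

lemma eucNorm_add_le (v w : Fin k → ℝ) : eucNorm (v + w) ≤ eucNorm v + eucNorm w := by
  rw [eucNorm_eq, eucNorm_eq, eucNorm_eq, toEuc_add]; exact norm_add_le _ _

lemma eucNorm_smul (t : ℝ) (v : Fin k → ℝ) : eucNorm (t • v) = |t| * eucNorm v := by
  rw [eucNorm_eq, eucNorm_eq, toEuc_smul, norm_smul, Real.norm_eq_abs]

lemma eucNorm_neg (v : Fin k → ℝ) : eucNorm (-v) = eucNorm v := by
  simp [eucNorm, neg_sq]

lemma eucNorm_zero : eucNorm (0 : Fin k → ℝ) = 0 := by simp [eucNorm]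

lemma eucNorm_single (j : Fin k) (t : ℝ) : eucNorm (Pi.single j t) = |t| := by
  rw [eucNorm]
  rw [Finset.sum_eq_single j]
  · simp [Real.sqrt_sq_eq_abs]
  · intro i _ hi; simp [Pi.single_eq_of_ne hi]
  · simp

lemma eucNorm_sum_le {ι : Type*} (s : Finset ι) (f : ι → (Fin k → ℝ)) :
    eucNorm (∑ j ∈ s, f j) ≤ ∑ j ∈ s, eucNorm (f j) := by
  have : toEuc (∑ j ∈ s, f j) = ∑ j ∈ s, toEuc (f j) :=
    map_sum (WithLp.addEquiv 2 (Fin k → ℝ)).symm f s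
  rw [eucNorm_eq, this]
  refine le_trans (norm_sum_le _ _) ?_
  exact le_of_eq (Finset.sum_congr rfl fun j _ => (eucNorm_eq (f j)).symm)

lemma eucNorm_continuous : Continuous fun v : EuclideanSpace ℝ (Fin k) => eucNorm v := by
  have : (fun v : EuclideanSpace ℝ (Fin k) => eucNorm v) = fun v => ‖v‖ := by
    funext v; exact eucNorm_eq v
  rw [this]; exact continuous_norm

lemma unitBall_eq : {v : Fin k → ℝ | eucNorm v ≤ 1} =
    (fun v : EuclideanSpace ℝ (Fin k) => (v : Fin k → ℝ)) '' Metric.closedBall 0 1 := by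
  ext v
  constructor
  · intro hv
    refine ⟨toEuc v, ?_, rfl⟩
    rw [Metric.mem_closedBall, dist_zero_right, ← eucNorm_eq]
    exact hv
  · rintro ⟨w, hw, rfl⟩
    rw [Metric.mem_closedBall, dist_zero_right] at hw
    rw [Set.mem_setOf_eq, eucNorm_eq]; exact hw

lemma bddAbove_opSet {m : ℕ} (A : Matrix (Fin m) (Fin k) ℝ) :
    BddAbove ((fun v => eucNorm (A.mulVec v)) '' {v | eucNorm v ≤ 1}) := by
  rw [unitBall_eq, Set.image_image]
  refine IsCompact.bddAbove ?_
  refine IsCompact.image (isCompact_closedBall _ _) ?_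
  simp only [eucNorm, Matrix.mulVec, dotProduct]
  fun_prop

lemma opNorm2_nonneg {m : ℕ} (A : Matrix (Fin m) (Fin k) ℝ) : 0 ≤ opNorm2 A := by
  have h0 : (0 : ℝ) = eucNorm (A.mulVec (0 : Fin k → ℝ)) := by
    rw [Matrix.mulVec_zero, eucNorm_zero]
  refine le_trans (le_of_eq h0) (le_csSup (bddAbove_opSet A) ?_)
  exact ⟨0, by simp [Set.mem_setOf_eq, eucNorm_zero], rfl⟩

lemma eucNorm_mulVec_le {m : ℕ} (A : Matrix (Fin m) (Fin k) ℝ) (v : Fin k → ℝ) :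
    eucNorm (A.mulVec v) ≤ opNorm2 A * eucNorm v := by
  rcases eq_or_lt_of_le (eucNorm_nonneg v) with h0 | hpos
  · have hv : v = 0 := by
      have := eucNorm_eq v
      have : ‖toEuc v‖ = 0 := by rw [← eucNorm_eq, ← h0]
      have : toEuc v = 0 := norm_eq_zero.mp this
      exact congrArg (WithLp.equiv 2 _) this
    simp [hv, Matrix.mulVec_zero, eucNorm_zero]
  · set c := eucNorm v with hc
    have hcne : c ≠ 0 := ne_of_gt hpos
    have hmem : eucNorm (c⁻¹ • v) ≤ 1 := by
      rw [eucNorm_smul, abs_of_nonneg (inv_nonneg.mpr hpos.le)]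
      rw [inv_mul_cancel₀ hcne]
    have hle : eucNorm (A.mulVec (c⁻¹ • v)) ≤ opNorm2 A :=
      le_csSup (bddAbove_opSet A) ⟨c⁻¹ • v, hmem, rfl⟩
    rw [Matrix.mulVec_smul, eucNorm_smul, abs_of_nonneg (inv_nonneg.mpr hpos.le)] at hle
    calc eucNorm (A.mulVec v) = c * (c⁻¹ * eucNorm (A.mulVec v)) := by
          rw [← mul_assoc, mul_inv_cancel₀ hcne, one_mul]
      _ ≤ c * opNorm2 A := by
          exact mul_le_mul_of_nonneg_left hle hpos.le
      _ = opNorm2 A * c := mul_comm _ _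

section pNormLemmas

variable {p : ℝ≥0∞} (hp : 1 ≤ p)

lemma toReal_pos (hpne : p ≠ ∞) (hp : 1 ≤ p) : 0 < p.toReal := by
  have h1 : (1 : ℝ≥0∞).toReal ≤ p.toReal := ENNReal.toReal_mono hpne hp
  simpa using lt_of_lt_of_le one_pos h1

lemma pNorm_nonneg (v : Fin k → ℝ) (hp : 1 ≤ p) : 0 ≤ pNorm p v := by
  rw [pNorm]
  split_ifs with h
  · exact Real.iSup_nonneg fun i => abs_nonneg _
  · exact Real.rpow_nonneg (Finset.sum_nonneg fun i _ =>
      Real.rpow_nonneg (abs_nonneg _) _) _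

lemma pNorm_zero (hk : 0 < k) (hp : 1 ≤ p) : pNorm p (0 : Fin k → ℝ) = 0 := by
  have : Nonempty (Fin k) := ⟨⟨0, hk⟩⟩
  rw [pNorm]
  split_ifs with h
  · simp
  · have hq : 0 < p.toReal := toReal_pos h hp
    have : ∀ i : Fin k, |(0 : Fin k → ℝ) i| ^ p.toReal = 0 := by
      intro i; simp [Real.zero_rpow (ne_of_gt hq)]
    rw [Finset.sum_congr rfl fun i _ => this i]
    simp only [Finset.sum_const, smul_zero]
    rw [Real.zero_rpow]
    positivity

lemma pNorm_neg (v : Fin k → ℝ) : pNorm p (-v) = pNorm p v := by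
  rw [pNorm, pNorm]
  split_ifs with h <;> simp

lemma pNorm_smul (hk : 0 < k) (hp : 1 ≤ p) (t : ℝ) (ht : 0 ≤ t) (v : Fin k → ℝ) :
    pNorm p (t • v) = t * pNorm p v := by
  have : Nonempty (Fin k) := ⟨⟨0, hk⟩⟩
  rw [pNorm, pNorm]
  split_ifs with h
  · rw [Real.mul_iSup_of_nonneg ht]
    congr 1; funext i
    simp [abs_mul, abs_of_nonneg ht]
  · have hq : 0 < p.toReal := toReal_pos h hp
    have h1 : ∀ i : Fin k, |(t • v) i| ^ p.toReal = t ^ p.toReal * |v i| ^ p.toReal := by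
      intro i
      rw [Pi.smul_apply, smul_eq_mul, abs_mul, abs_of_nonneg ht,
        Real.mul_rpow ht (abs_nonneg _)]
    rw [Finset.sum_congr rfl fun i _ => h1 i, ← Finset.mul_sum,
      Real.mul_rpow (Real.rpow_nonneg ht _)
        (Finset.sum_nonneg fun i _ => Real.rpow_nonneg (abs_nonneg _) _),
      ← Real.rpow_mul ht, mul_one_div, div_self (ne_of_gt hq), Real.rpow_one]

end pNormLemmas

section Taylor

variable {n m : ℕ}

/-- Euclidean-space view of a vector in `Fin m → ℝ`, as a continuous linear equiv. -/
def em (m : ℕ) : (Fin m → ℝ) ≃L[ℝ] EuclideanSpace ℝ (Fin m) :=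
  (PiLp.continuousLinearEquiv 2 ℝ (fun _ : Fin m => ℝ)).symm

lemma norm_em (w : Fin m → ℝ) : ‖em m w‖ = eucNorm w := (eucNorm_eq w).symm

lemma taylor_bound (F : (Fin n → ℝ) → (Fin m → ℝ))
    (J : (Fin n → ℝ) → Matrix (Fin m) (Fin n) ℝ)
    (hJ : ∀ y, HasFDerivAt F (LinearMap.toContinuousLinearMap (Matrix.mulVecLin (J y))) y)
    (LJ : ℝ) (hLJ : 0 ≤ LJ)
    (hJLip : ∀ y z, opNorm2 (J y - J z) ≤ LJ * eucNorm (y - z))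
    (x d : Fin n → ℝ) :
    eucNorm (F (x + d) - F x - (J x).mulVec d) ≤ LJ / 2 * eucNorm d ^ 2 := by
  -- the path γ t = x + t • d
  have hγ : ∀ t : ℝ, HasDerivAt (fun t : ℝ => x + t • d) d t := by
    intro t
    have h1 : HasDerivAt (fun t : ℝ => t • d) ((1 : ℝ) • d) t :=
      (hasDerivAt_id t).smul_const d
    simpa using h1.const_add x
  -- g t = em (F (x + t • d))
  set g : ℝ → EuclideanSpace ℝ (Fin m) := fun t => em m (F (x + t • d)) with hg_def
  have hg : ∀ t : ℝ, HasDerivAt g (em m ((J (x + t • d)).mulVec d)) t := by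
    intro t
    have h1 : HasDerivAt (fun t : ℝ => F (x + t • d)) ((J (x + t • d)).mulVec d) t := by
      have := (hJ (x + t • d)).comp_hasDerivAt t (hγ t)
      exact this
    exact ((em m).toContinuousLinearMap.hasFDerivAt.comp_hasDerivAt t h1)
  -- φ t = g t - t • em ((J x).mulVec d)
  set c : EuclideanSpace ℝ (Fin m) := em m ((J x).mulVec d) with hc_def
  set φ : ℝ → EuclideanSpace ℝ (Fin m) := fun t => g t - t • c with hφ_def
  set φ' : ℝ → EuclideanSpace ℝ (Fin m) :=
    fun t => em m ((J (x + t • d)).mulVec d) - c with hφ'_def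
  have hφ : ∀ t : ℝ, HasDerivAt φ (φ' t) t := by
    intro t
    have h2 : HasDerivAt (fun t : ℝ => t • c) ((1 : ℝ) • c) t :=
      (hasDerivAt_id t).smul_const c
    have h3 := (hg t).sub h2
    rw [one_smul] at h3
    exact h3
  have hφ'_eq : ∀ t : ℝ, φ' t = em m (((J (x + t • d)) - J x).mulVec d) := by
    intro t
    rw [hφ'_def, hc_def, Matrix.sub_mulVec, map_sub]
  have hφ'_norm : ∀ t : ℝ, ‖φ' t‖ ≤ LJ * eucNorm d ^ 2 * |t| := by
    intro t
    rw [hφ'_eq t, norm_em]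
    calc eucNorm (((J (x + t • d)) - J x).mulVec d)
        ≤ opNorm2 ((J (x + t • d)) - J x) * eucNorm d := eucNorm_mulVec_le _ _
      _ ≤ LJ * eucNorm (x + t • d - x) * eucNorm d := by
          exact mul_le_mul_of_nonneg_right (hJLip _ _) (eucNorm_nonneg d)
      _ = LJ * eucNorm d ^ 2 * |t| := by
          rw [add_sub_cancel_left, eucNorm_smul]; ring
  -- continuity of φ'
  have hφ'_lip : LipschitzWith (Real.toNNReal (LJ * eucNorm d ^ 2)) φ' := by
    refine LipschitzWith.of_dist_le_mul fun a b => ?_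
    have key : φ' a - φ' b = em m (((J (x + a • d)) - J (x + b • d)).mulVec d) := by
      rw [hφ'_eq a, hφ'_eq b, ← map_sub, ← Matrix.sub_mulVec]
      congr 2
      abel
    rw [dist_eq_norm, key, norm_em]
    calc eucNorm (((J (x + a • d)) - J (x + b • d)).mulVec d)
        ≤ opNorm2 ((J (x + a • d)) - J (x + b • d)) * eucNorm d := eucNorm_mulVec_le _ _
      _ ≤ LJ * eucNorm ((x + a • d) - (x + b • d)) * eucNorm d := by
          exact mul_le_mul_of_nonneg_right (hJLip _ _) (eucNorm_nonneg d)
      _ = LJ * eucNorm d ^ 2 * |a - b| := by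
          have : (x + a • d) - (x + b • d) = (a - b) • d := by
            rw [sub_smul]; abel
          rw [this, eucNorm_smul]; ring
      _ ≤ (Real.toNNReal (LJ * eucNorm d ^ 2) : ℝ) * dist a b := by
          rw [Real.dist_eq]
          refine mul_le_mul_of_nonneg_right ?_ (abs_nonneg _)
          exact Real.le_coe_toNNReal _
  have hφ'_cont : Continuous φ' := hφ'_lip.continuous
  -- FTC
  have hFTC : ∫ t in (0:ℝ)..1, φ' t = φ 1 - φ 0 := by
    refine intervalIntegral.integral_eq_sub_of_hasDerivAt (fun t _ => hφ t) ?_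
    exact hφ'_cont.intervalIntegrable _ _
  have hval : φ 1 - φ 0 = em m (F (x + d) - F x - (J x).mulVec d) := by
    rw [hφ_def]
    simp only [hg_def, one_smul, zero_smul, sub_zero]
    rw [hc_def, map_sub, map_sub]
    abel
  have hbound : ‖∫ t in (0:ℝ)..1, φ' t‖ ≤ |∫ t in (0:ℝ)..1, LJ * eucNorm d ^ 2 * t| := by
    refine intervalIntegral.norm_integral_le_abs_of_norm_le ?_ ?_
    · refine MeasureTheory.ae_restrict_of_forall_mem measurableSet_uIoc fun t ht => ?_
      rw [Set.uIoc_of_le (by norm_num : (0:ℝ) ≤ 1)] at ht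
      have ht0 : 0 < t := ht.1
      have := hφ'_norm t
      rwa [abs_of_pos ht0] at this
    · exact (Continuous.intervalIntegrable (by continuity) _ _)
  have hint : ∫ t in (0:ℝ)..1, LJ * eucNorm d ^ 2 * t = LJ * eucNorm d ^ 2 / 2 := by
    rw [intervalIntegral.integral_const_mul, integral_id]
    ring
  calc eucNorm (F (x + d) - F x - (J x).mulVec d)
      = ‖em m (F (x + d) - F x - (J x).mulVec d)‖ := (norm_em _).symm
    _ = ‖∫ t in (0:ℝ)..1, φ' t‖ := by rw [hFTC, hval]
    _ ≤ |∫ t in (0:ℝ)..1, LJ * eucNorm d ^ 2 * t| := hbound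
    _ = LJ * eucNorm d ^ 2 / 2 := by
        rw [hint, abs_of_nonneg (by positivity)]
    _ = LJ / 2 * eucNorm d ^ 2 := by ring

end Taylor

lemma sum_abs_le_sqrt (v : Fin k → ℝ) :
    ∑ j, |v j| ≤ Real.sqrt k * eucNorm v := by
  have h1 : (∑ j, |v j|) ^ 2 ≤ (k : ℝ) * ∑ j, v j ^ 2 := by
    have := sq_sum_le_card_mul_sum_sq (s := (Finset.univ : Finset (Fin k)))
      (f := fun j => |v j|)
    simpa [sq_abs] using this
  have h2 : ∑ j, |v j| = Real.sqrt ((∑ j, |v j|) ^ 2) := by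
    rw [Real.sqrt_sq (Finset.sum_nonneg fun j _ => abs_nonneg _)]
  rw [h2, eucNorm, ← Real.sqrt_mul (Nat.cast_nonneg k)]
  exact Real.sqrt_le_sqrt h1

lemma mulVec_eq_sum {m : ℕ} (M : Matrix (Fin m) (Fin k) ℝ) (v : Fin k → ℝ) :
    M.mulVec v = ∑ j, v j • (fun i => M i j) := by
  funext i
  simp [Matrix.mulVec, dotProduct, Finset.sum_apply, mul_comm]

set_option maxHeartbeats 400000 in
lemma fd_error {n m : ℕ} (F : (Fin n → ℝ) → (Fin m → ℝ))
    (J : (Fin n → ℝ) → Matrix (Fin m) (Fin n) ℝ)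
    (hJ : ∀ y, HasFDerivAt F (LinearMap.toContinuousLinearMap (Matrix.mulVecLin (J y))) y)
    (LJ : ℝ) (hLJ : 0 ≤ LJ)
    (hJLip : ∀ y z, opNorm2 (J y - J z) ≤ LJ * eucNorm (y - z))
    (x : Fin n → ℝ) (τ : ℝ) (hτ : 0 < τ) (v : Fin n → ℝ) :
    eucNorm ((fdMatrix F x τ - J x).mulVec v) ≤
      LJ * Real.sqrt n * τ / 2 * eucNorm v := by
  set M := fdMatrix F x τ - J x with hM
  have hcol : ∀ j : Fin n, eucNorm (fun i => M i j) ≤ LJ * τ / 2 := by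
    intro j
    have hcol_eq : (fun i => M i j) =
        τ⁻¹ • (F (x + Pi.single j τ) - F x - (J x).mulVec (Pi.single j τ)) := by
      funext i
      have hJx : (J x).mulVec (Pi.single j τ) i = J x i j * τ := by
        simp [Matrix.mulVec, dotProduct, Pi.single_apply, Finset.sum_eq_single j,
          mul_comm]
      have hMij : M i j = (F (x + Pi.single j τ) i - F x i) / τ - J x i j := rfl
      rw [hMij]
      simp only [Pi.smul_apply, Pi.sub_apply, smul_eq_mul, hJx]
      field_simp
    rw [hcol_eq, eucNorm_smul, abs_of_nonneg (inv_nonneg.mpr hτ.le)]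
    have htay := taylor_bound F J hJ LJ hLJ hJLip x (Pi.single j τ)
    rw [eucNorm_single, abs_of_nonneg hτ.le] at htay
    have h2 := mul_le_mul_of_nonneg_left htay (inv_nonneg.mpr hτ.le)
    have h3 : τ⁻¹ * (LJ / 2 * τ ^ 2) = LJ * τ / 2 := by field_simp
    rw [h3] at h2
    exact h2
  calc eucNorm (M.mulVec v) = eucNorm (∑ j, v j • (fun i => M i j)) := by
        rw [mulVec_eq_sum]
    _ ≤ ∑ j, eucNorm (v j • (fun i => M i j)) := eucNorm_sum_le _ _
    _ ≤ ∑ j, |v j| * (LJ * τ / 2) := by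
        refine Finset.sum_le_sum fun j _ => ?_
        rw [eucNorm_smul]
        exact mul_le_mul_of_nonneg_left (hcol j) (abs_nonneg _)
    _ = (LJ * τ / 2) * ∑ j, |v j| := by rw [← Finset.sum_mul]; ring
    _ ≤ (LJ * τ / 2) * (Real.sqrt n * eucNorm v) := by
        refine mul_le_mul_of_nonneg_left (sum_abs_le_sqrt v) (by positivity)
    _ = LJ * Real.sqrt n * τ / 2 * eucNorm v := by ring

lemma model_bddBelow {n m : ℕ} {p : ℝ≥0∞}
    (h : (Fin m → ℝ) → ℝ) (Lh : ℝ) (hLh0 : 0 ≤ Lh)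
    (hhLip : ∀ z w, |h z - h w| ≤ Lh * pNorm p (z - w))
    (cnp cpm : ℝ) (hcnp0 : 0 ≤ cnp) (hcpm0 : 0 ≤ cpm)
    (hcnp : ∀ v : Fin n → ℝ, eucNorm v ≤ cnp * pNorm p v)
    (hcpm : ∀ z : Fin m → ℝ, pNorm p z ≤ cpm * eucNorm z)
    (w : Fin m → ℝ) (M : Matrix (Fin m) (Fin n) ℝ) (Ω : Set (Fin n → ℝ))
    (xx : Fin n → ℝ) (r : ℝ) :
    BddBelow ((fun s => h (w + M.mulVec s)) '' {s | xx + s ∈ Ω ∧ pNorm p s ≤ r}) := by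
  refine ⟨h w - Lh * (cpm * (opNorm2 M * (cnp * r))), ?_⟩
  rintro b ⟨s, ⟨-, hs⟩, rfl⟩
  have h1 : |h w - h (w + M.mulVec s)| ≤ Lh * pNorm p (w - (w + M.mulVec s)) := hhLip _ _
  have h2 : w - (w + M.mulVec s) = -(M.mulVec s) := by abel
  rw [h2, pNorm_neg] at h1
  have h3 : pNorm p (M.mulVec s) ≤ cpm * (opNorm2 M * (cnp * r)) := by
    refine le_trans (hcpm _) ?_
    refine mul_le_mul_of_nonneg_left ?_ hcpm0
    refine le_trans (eucNorm_mulVec_le M s) ?_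
    refine mul_le_mul_of_nonneg_left ?_ (opNorm2_nonneg M)
    refine le_trans (hcnp s) (mul_le_mul_of_nonneg_left hs hcnp0)
  have h4 : h w - h (w + M.mulVec s) ≤ Lh * pNorm p (M.mulVec s) :=
    le_trans (le_abs_self _) h1
  have h5 : Lh * pNorm p (M.mulVec s) ≤ Lh * (cpm * (opNorm2 M * (cnp * r))) :=
    mul_le_mul_of_nonneg_left h3 hLh0
  simp only [Set.mem_setOf_eq]
  linarith

lemma invariants {n m : ℕ} {Ω : Set (Fin n → ℝ)} {F : (Fin n → ℝ) → (Fin m → ℝ)}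
    {h : (Fin m → ℝ) → ℝ} {p : ℝ≥0∞} {Lh cpm cnp ε σ α θ Δstar : ℝ}
    {x : ℕ → Fin n → ℝ} {τ Δ : ℕ → ℝ} {A : ℕ → Matrix (Fin m) (Fin n) ℝ}
    {d : ℕ → Fin n → ℝ} {ρ : ℕ → ℝ}
    (hn : 1 ≤ n) (hε : 0 < ε) (hLh : 0 < Lh) (hσ : 0 < σ) (hcpm : 0 < cpm) (hcnp : 0 < cnp)
    (hrun : TRFDrun Ω F h p Lh cpm cnp ε σ α θ Δstar x τ Δ A d ρ) :
    ∀ k, x k ∈ Ω ∧ 0 < τ k ∧ τ k * Real.sqrt n ≤ Δ k ∧ Δ k ≤ Δstar := by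
  obtain ⟨hx0, hτ0, hΔ00, hΔ0star, hA, hstep⟩ := hrun
  have hsqn : 0 < Real.sqrt n := Real.sqrt_pos.mpr (by exact_mod_cast hn.trans_lt' zero_lt_one)
  intro k
  induction k with
  | zero =>
    refine ⟨hx0, ?_, hΔ00, hΔ0star⟩
    rw [hτ0]
    exact div_pos hε (by positivity)
  | succ k ih =>
    obtain ⟨hxk, hτk, hτΔ, hΔs⟩ := ih
    have hΔpos : 0 < Δ k := lt_of_lt_of_le (mul_pos hτk hsqn) hτΔ
    rcases hstep k with ⟨-, hx1, hΔ1, hτ1⟩ | ⟨-, -, hxd, -, -, hsub⟩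
    · refine ⟨hx1 ▸ hxk, ?_, ?_, hΔ1 ▸ hΔs⟩
      · rw [hτ1]; positivity
      · rw [hτ1, hΔ1]
        nlinarith
    · rcases hsub with ⟨-, hx1, hΔ1, hτ1⟩ | ⟨-, hhalf, hx1, hΔ1, hτ1⟩ | ⟨-, hhalf, hx1, hΔ1, hτ1⟩
      · refine ⟨hx1 ▸ hxd, hτ1 ▸ hτk, ?_, ?_⟩
        · rw [hτ1, hΔ1]
          exact le_min (by linarith) (le_trans hτΔ hΔs)
        · rw [hΔ1]
          exact min_le_right _ _
      · exact ⟨hx1 ▸ hxk, hτ1 ▸ hτk, by rw [hτ1, hΔ1]; linarith, by rw [hΔ1]; linarith⟩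
      · refine ⟨hx1 ▸ hxk, ?_, ?_, by rw [hΔ1]; linarith⟩
        · rw [hτ1]; positivity
        · rw [hτ1, hΔ1]; nlinarith

end TRFDaux

/-- Lemma 3.2: sufficient condition for a successful iteration. -/
theorem stmt8
    {n m : ℕ} (hn : 1 ≤ n) (hm : 1 ≤ m) (p : ℝ≥0∞) (hp : 1 ≤ p)
    (Ω : Set (Fin n → ℝ)) (hΩne : Ω.Nonempty) (hΩcl : IsClosed Ω) (hΩcv : Convex ℝ Ω)
    (F : (Fin n → ℝ) → (Fin m → ℝ)) (J : (Fin n → ℝ) → Matrix (Fin m) (Fin n) ℝ)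
    (hJ : ∀ y, HasFDerivAt F (LinearMap.toContinuousLinearMap (Matrix.mulVecLin (J y))) y)
    (LJ : ℝ) (hLJ : 0 < LJ)
    (hJLip : ∀ y z, opNorm2 (J y - J z) ≤ LJ * eucNorm (y - z))
    (h : (Fin m → ℝ) → ℝ) (hconv : ConvexOn ℝ Set.univ h)
    (Lh : ℝ) (hLh : 0 < Lh)
    (hhLip : ∀ z w, |h z - h w| ≤ Lh * pNorm p (z - w))
    (cnp cpm : ℝ) (hcnp1 : 1 ≤ cnp) (hcpm1 : 1 ≤ cpm)
    (hcnp : ∀ v : Fin n → ℝ, eucNorm v ≤ cnp * pNorm p v)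
    (hcpm : ∀ z : Fin m → ℝ, pNorm p z ≤ cpm * eucNorm z)
    (ε σ α θ Δstar : ℝ) (hε : 0 < ε) (hσ : 0 < σ)
    (hα0 : 0 < α) (hα1 : α < 1) (hθ0 : 0 < θ) (hθ1 : θ ≤ 1)
    (x : ℕ → Fin n → ℝ) (τ Δ : ℕ → ℝ) (A : ℕ → Matrix (Fin m) (Fin n) ℝ)
    (d : ℕ → Fin n → ℝ) (ρ : ℕ → ℝ)
    (hrun : TRFDrun Ω F h p Lh cpm cnp ε σ α θ Δstar x τ Δ A d ρ)
    (k : ℕ) (hψ : ε < psi Ω F h J p Δstar (x k))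
    (hΔk : Δ k ≤ (1 - α) * θ * eta Ω F h p Δstar (x k) (A k) /
      (Lh * LJ * cpm * cnp ^ 2)) :
    ε / 2 ≤ eta Ω F h p Δstar (x k) (A k) ∧ α ≤ ρ k := by
  classical
  have hn0 : 0 < n := hn
  have hLh0 : (0:ℝ) ≤ Lh := hLh.le
  have hcnp0 : (0:ℝ) < cnp := lt_of_lt_of_le zero_lt_one hcnp1
  have hcpm0 : (0:ℝ) < cpm := lt_of_lt_of_le zero_lt_one hcpm1
  have hsqn : 0 < Real.sqrt n :=
    Real.sqrt_pos.mpr (by exact_mod_cast hn.trans_lt' zero_lt_one)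
  obtain ⟨hxk, hτk, hτΔ, hΔles⟩ :=
    TRFDaux.invariants hn hε hLh hσ hcpm0 hcnp0 hrun k
  have hcase := hrun.2.2.2.2.2 k
  have hA := hrun.2.2.2.2.1
  have hΔk0 : 0 < Δ k := lt_of_lt_of_le (mul_pos hτk hsqn) hτΔ
  have hΔs0 : 0 < Δstar := lt_of_lt_of_le hΔk0 hΔles
  set IA := sInf ((fun s => h (F (x k) + (A k).mulVec s)) ''
    {s | x k + s ∈ Ω ∧ pNorm p s ≤ Δstar}) with hIA
  set IJ := sInf ((fun s => h (F (x k) + (J (x k)).mulVec s)) ''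
    {s | x k + s ∈ Ω ∧ pNorm p s ≤ Δstar}) with hIJ
  set Ik := sInf ((fun s => h (F (x k) + (A k).mulVec s)) ''
    {s | x k + s ∈ Ω ∧ pNorm p s ≤ Δ k}) with hIk
  set E := eta Ω F h p Δstar (x k) (A k) with hE
  have hetaE : E = Δstar⁻¹ * (h (F (x k)) - IA) := rfl
  have hpsiE : psi Ω F h J p Δstar (x k) = Δstar⁻¹ * (h (F (x k)) - IJ) := rfl
  have hψ' : ε < Δstar⁻¹ * (h (F (x k)) - IJ) := by rw [← hpsiE]; exact hψ
  clear_value IA IJ Ik E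
  have hmem0 : ∀ r : ℝ, 0 ≤ r →
      (0 : Fin n → ℝ) ∈ {s : Fin n → ℝ | x k + s ∈ Ω ∧ pNorm p s ≤ r} := by
    intro r hr
    refine ⟨by simpa using hxk, ?_⟩
    rw [TRFDaux.pNorm_zero hn0 hp]
    exact hr
  have hBddA := TRFDaux.model_bddBelow h Lh hLh0 hhLip cnp cpm hcnp0.le hcpm0.le
    hcnp hcpm (F (x k)) (A k) Ω (x k) Δstar
  have hBddJ := TRFDaux.model_bddBelow h Lh hLh0 hhLip cnp cpm hcnp0.le hcpm0.le
    hcnp hcpm (F (x k)) (J (x k)) Ω (x k) Δstar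
  have hBddk := TRFDaux.model_bddBelow h Lh hLh0 hhLip cnp cpm hcnp0.le hcpm0.le
    hcnp hcpm (F (x k)) (A k) Ω (x k) (Δ k)
  have hneA : ((fun s => h (F (x k) + (A k).mulVec s)) ''
      {s | x k + s ∈ Ω ∧ pNorm p s ≤ Δstar}).Nonempty :=
    ⟨_, ⟨0, hmem0 _ hΔs0.le, rfl⟩⟩
  have hneJ : ((fun s => h (F (x k) + (J (x k)).mulVec s)) ''
      {s | x k + s ∈ Ω ∧ pNorm p s ≤ Δstar}).Nonempty :=
    ⟨_, ⟨0, hmem0 _ hΔs0.le, rfl⟩⟩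
  have hIA_le : IA ≤ h (F (x k)) := by
    rw [hIA]
    have := csInf_le hBddA ⟨0, hmem0 _ hΔs0.le, rfl⟩
    simpa [Matrix.mulVec_zero] using this
  have hE0 : 0 ≤ E := by
    rw [hetaE]
    exact mul_nonneg (inv_nonneg.mpr hΔs0.le) (by linarith)
  -- Part 1 : ε/2 ≤ E
  set err := Lh * cpm * cnp * (LJ * Real.sqrt n * τ k / 2) with herr
  clear_value err
  have herr0 : 0 ≤ err := by
    rw [herr]
    refine mul_nonneg (mul_nonneg (mul_nonneg hLh0 hcpm0.le) hcnp0.le) ?_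
    exact div_nonneg (mul_nonneg (mul_nonneg hLJ.le hsqn.le) hτk.le) (by norm_num)
  have hkey : ∀ s ∈ {s : Fin n → ℝ | x k + s ∈ Ω ∧ pNorm p s ≤ Δstar},
      h (F (x k) + (A k).mulVec s) ≤ h (F (x k) + (J (x k)).mulVec s) + err * Δstar := by
    intro s hs
    have h1 := hhLip (F (x k) + (A k).mulVec s) (F (x k) + (J (x k)).mulVec s)
    have h2 : (F (x k) + (A k).mulVec s) - (F (x k) + (J (x k)).mulVec s) =
        (fdMatrix F (x k) (τ k) - J (x k)).mulVec s := by
      rw [Matrix.sub_mulVec, ← hA k]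
      abel
    rw [h2] at h1
    have h3 : pNorm p ((fdMatrix F (x k) (τ k) - J (x k)).mulVec s) ≤
        cpm * (LJ * Real.sqrt n * τ k / 2 * (cnp * Δstar)) := by
      refine le_trans (hcpm _) (mul_le_mul_of_nonneg_left ?_ hcpm0.le)
      refine le_trans (TRFDaux.fd_error F J hJ LJ hLJ.le hJLip (x k) (τ k) hτk s) ?_
      refine mul_le_mul_of_nonneg_left ?_ ?_
      · exact le_trans (hcnp s) (mul_le_mul_of_nonneg_left hs.2 hcnp0.le)
      · exact div_nonneg (mul_nonneg (mul_nonneg hLJ.le hsqn.le) hτk.le) (by norm_num)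
    have h4 := le_trans (le_abs_self _) h1
    have h5 := mul_le_mul_of_nonneg_left h3 hLh0
    have h6 : Lh * (cpm * (LJ * Real.sqrt n * τ k / 2 * (cnp * Δstar))) = err * Δstar := by
      rw [herr]; ring
    linarith
  have hIAIJ : IA ≤ IJ + err * Δstar := by
    rw [← sub_le_iff_le_add, hIJ]
    refine le_csInf hneJ ?_
    rintro b ⟨s, hs, rfl⟩
    have h6 : IA ≤ h (F (x k) + (A k).mulVec s) := by
      rw [hIA]; exact csInf_le hBddA ⟨s, hs, rfl⟩
    have h7 := hkey s hs
    dsimp only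
    linarith
  have hψη : Δstar⁻¹ * (h (F (x k)) - IJ) ≤ E + err := by
    have h8 : h (F (x k)) - IJ ≤ (h (F (x k)) - IA) + err * Δstar := by linarith
    have h9 := mul_le_mul_of_nonneg_left h8 (inv_nonneg.mpr hΔs0.le)
    have h10 : Δstar⁻¹ * ((h (F (x k)) - IA) + err * Δstar) =
        Δstar⁻¹ * (h (F (x k)) - IA) + err := by
      field_simp
    rw [h10] at h9
    rw [hetaE]
    linarith
  have hC : 0 < Lh * LJ * cpm * cnp ^ 2 :=
    mul_pos (mul_pos (mul_pos hLh hLJ) hcpm0) (pow_pos hcnp0 2)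
  have hΔk' : Δ k * (Lh * LJ * cpm * cnp ^ 2) ≤ (1 - α) * θ * E :=
    (le_div_iff₀ hC).mp hΔk
  have h11 : (τ k * Real.sqrt n) * (Lh * LJ * cpm * cnp ^ 2) ≤
      Δ k * (Lh * LJ * cpm * cnp ^ 2) := mul_le_mul_of_nonneg_right hτΔ hC.le
  have h12 : (1 - α) * θ ≤ 1 :=
    mul_le_one₀ (by linarith) hθ0.le hθ1
  have h13 : (1 - α) * θ * E ≤ E := by
    have := mul_le_mul_of_nonneg_right h12 hE0
    linarith
  have herr2 : err * (2 * cnp) = (τ k * Real.sqrt n) * (Lh * LJ * cpm * cnp ^ 2) := by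
    rw [herr]; ring
  have h14 : err * (2 * cnp) ≤ E := by linarith
  have h15 : err * 2 ≤ err * (2 * cnp) := by
    refine mul_le_mul_of_nonneg_left ?_ herr0
    linarith
  have part1 : ε / 2 ≤ E := by linarith
  refine ⟨part1, ?_⟩
  -- Part 2 : α ≤ ρ k
  rcases hcase with ⟨hlt, -, -, -⟩ | ⟨-, hdk, hxdk, hpred, hρdef, -⟩
  · linarith
  have hdE : eucNorm (d k) ≤ cnp * Δ k :=
    le_trans (hcnp _) (mul_le_mul_of_nonneg_left hdk hcnp0.le)
  set t := Δ k / Δstar with ht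
  have ht0 : 0 < t := div_pos hΔk0 hΔs0
  have ht1 : t ≤ 1 := (div_le_one hΔs0).mpr hΔles
  have hstepA : t * (h (F (x k)) - IA) ≤ h (F (x k)) - Ik := by
    have hIk_le : Ik ≤ (1 - t) * h (F (x k)) + t * IA := by
      refine le_of_forall_pos_le_add ?_
      intro δ hδ
      obtain ⟨b, hbmem, hblt⟩ := Real.lt_sInf_add_pos hneA (div_pos hδ ht0)
      obtain ⟨s, hs, rfl⟩ := hbmem
      dsimp only at hblt
      rw [← hIA] at hblt
      have hsmem : t • s ∈ {s : Fin n → ℝ | x k + s ∈ Ω ∧ pNorm p s ≤ Δ k} := by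
        refine ⟨?_, ?_⟩
        · have hc := hΩcv hxk hs.1 (by linarith : (0:ℝ) ≤ 1 - t) ht0.le (by ring)
          have heq : (1 - t) • x k + t • (x k + s) = x k + t • s := by
            rw [smul_add, sub_smul, one_smul]
            abel
          rwa [heq] at hc
        · show pNorm p (t • s) ≤ Δ k
          rw [TRFDaux.pNorm_smul hn0 hp t ht0.le]
          calc t * pNorm p s ≤ t * Δstar :=
                mul_le_mul_of_nonneg_left hs.2 ht0.le
            _ = Δ k := div_mul_cancel₀ _ (ne_of_gt hΔs0)
      have hIk_le2 : Ik ≤ h (F (x k) + (A k).mulVec (t • s)) := by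
        rw [hIk]; exact csInf_le hBddk ⟨t • s, hsmem, rfl⟩
      have hcomb : F (x k) + (A k).mulVec (t • s) =
          (1 - t) • F (x k) + t • (F (x k) + (A k).mulVec s) := by
        rw [Matrix.mulVec_smul, sub_smul, one_smul, smul_add]
        abel
      have hconv2 : h (F (x k) + (A k).mulVec (t • s)) ≤
          (1 - t) * h (F (x k)) + t * h (F (x k) + (A k).mulVec s) := by
        rw [hcomb]
        have := hconv.2 (Set.mem_univ (F (x k)))
          (Set.mem_univ (F (x k) + (A k).mulVec s))
          (by linarith : (0:ℝ) ≤ 1 - t) ht0.le (by ring)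
        simpa [smul_eq_mul] using this
      have ht' : t * (δ / t) = δ := by field_simp
      have hb2 := mul_le_mul_of_nonneg_left hblt.le ht0.le
      rw [mul_add, ht'] at hb2
      linarith
    linarith
  have hIAeq : h (F (x k)) - IA = Δstar * E := by
    rw [hetaE, ← mul_assoc, mul_inv_cancel₀ (ne_of_gt hΔs0), one_mul]
  have htΔ : t * Δstar = Δ k := by
    rw [ht]
    exact div_mul_cancel₀ _ (ne_of_gt hΔs0)
  have htIA : t * (h (F (x k)) - IA) = Δ k * E := by
    rw [hIAeq, ← htΔ]
    ring
  set pred := h (F (x k)) - h (F (x k) + (A k).mulVec (d k)) with hpredd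
  clear_value pred
  have hpredge : θ * (Δ k * E) ≤ pred := by
    calc θ * (Δ k * E) = θ * (t * (h (F (x k)) - IA)) := by rw [htIA]
      _ ≤ θ * (h (F (x k)) - Ik) := mul_le_mul_of_nonneg_left hstepA hθ0.le
      _ ≤ pred := hpred
  have hE2 : 0 < E := lt_of_lt_of_le (half_pos hε) part1
  have hpredpos : 0 < pred :=
    lt_of_lt_of_le (mul_pos hθ0 (mul_pos hΔk0 hE2)) hpredge
  have hu := TRFDaux.taylor_bound F J hJ LJ hLJ.le hJLip (x k) (d k)
  have hv := TRFDaux.fd_error F J hJ LJ hLJ.le hJLip (x k) (τ k) hτk (d k)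
  have hsplit : F (x k + d k) - (F (x k) + (A k).mulVec (d k)) =
      (F (x k + d k) - F (x k) - (J (x k)).mulVec (d k)) +
      -((fdMatrix F (x k) (τ k) - J (x k)).mulVec (d k)) := by
    rw [Matrix.sub_mulVec, ← hA k]
    abel
  have hnorm1 : eucNorm (F (x k + d k) - (F (x k) + (A k).mulVec (d k))) ≤
      LJ / 2 * eucNorm (d k) ^ 2 +
      LJ * Real.sqrt n * τ k / 2 * eucNorm (d k) := by
    rw [hsplit]
    refine le_trans (TRFDaux.eucNorm_add_le _ _) ?_
    rw [TRFDaux.eucNorm_neg]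
    exact add_le_add hu hv
  have hnorm2 : eucNorm (F (x k + d k) - (F (x k) + (A k).mulVec (d k))) ≤
      LJ * cnp ^ 2 * Δ k ^ 2 := by
    have b1 : LJ / 2 * eucNorm (d k) ^ 2 ≤ LJ / 2 * (cnp * Δ k) ^ 2 := by
      refine mul_le_mul_of_nonneg_left ?_ (by linarith)
      exact pow_le_pow_left₀ (TRFDaux.eucNorm_nonneg _) hdE 2
    have c1 : LJ * Real.sqrt n * τ k ≤ LJ * Δ k := by
      have := mul_le_mul_of_nonneg_left hτΔ hLJ.le
      linarith [this]
    have b2 : LJ * Real.sqrt n * τ k / 2 * eucNorm (d k) ≤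
        LJ * Δ k / 2 * (cnp * Δ k) := by
      refine mul_le_mul (by linarith) hdE (TRFDaux.eucNorm_nonneg _) ?_
      exact div_nonneg (mul_nonneg hLJ.le hΔk0.le) (by norm_num)
    have hcnpsq : cnp ≤ cnp ^ 2 := by
      calc cnp = 1 * cnp := (one_mul cnp).symm
        _ ≤ cnp * cnp := mul_le_mul_of_nonneg_right hcnp1 hcnp0.le
        _ = cnp ^ 2 := (sq cnp).symm
    have hint := mul_nonneg (mul_nonneg hLJ.le (sq_nonneg (Δ k)))
      (sub_nonneg.mpr hcnpsq)
    linarith [hnorm1, b1, b2, hint]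
  have hdiffh : h (F (x k + d k)) - h (F (x k) + (A k).mulVec (d k)) ≤
      Lh * (cpm * (LJ * cnp ^ 2 * Δ k ^ 2)) := by
    have g1 := hhLip (F (x k + d k)) (F (x k) + (A k).mulVec (d k))
    have g2 := le_trans (le_abs_self _) g1
    have g3 : pNorm p (F (x k + d k) - (F (x k) + (A k).mulVec (d k))) ≤
        cpm * (LJ * cnp ^ 2 * Δ k ^ 2) :=
      le_trans (hcpm _) (mul_le_mul_of_nonneg_left hnorm2 hcpm0.le)
    have g4 := mul_le_mul_of_nonneg_left g3 hLh0
    linarith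
  have hfinal : pred - (h (F (x k)) - h (F (x k + d k))) ≤ (1 - α) * pred := by
    have e1 : pred - (h (F (x k)) - h (F (x k + d k))) =
        h (F (x k + d k)) - h (F (x k) + (A k).mulVec (d k)) := by
      rw [hpredd]; ring
    have e2 : Lh * (cpm * (LJ * cnp ^ 2 * Δ k ^ 2)) =
        Δ k * (Lh * LJ * cpm * cnp ^ 2) * Δ k := by ring
    have e3 : Δ k * (Lh * LJ * cpm * cnp ^ 2) * Δ k ≤ (1 - α) * θ * E * Δ k :=
      mul_le_mul_of_nonneg_right hΔk' hΔk0.le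
    have e4 : (1 - α) * θ * E * Δ k = (1 - α) * (θ * (Δ k * E)) := by ring
    have e5 : (1 - α) * (θ * (Δ k * E)) ≤ (1 - α) * pred :=
      mul_le_mul_of_nonneg_left hpredge (by linarith)
    linarith
  have hared : α * pred ≤ h (F (x k)) - h (F (x k + d k)) := by linarith
  rw [hρdef, le_div_iff₀ hpredpos]
  exact hared
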